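/- For all α ∈ (0,1], all u with Φ̄(u) ≤ α/2, and all v ≥ 0, the function g_α(u) := Φ̄⁻¹(Φ̄(u)/α) satisfies g_α(u + v) ≥ g_α(u) + v. -/

import Mathlib

open MeasureTheory Real Set

/-- Standard normal density. -/
noncomputable def phi (x : ℝ) : ℝ := (Real.sqrt (2 * Real.pi))⁻¹ * Real.exp (-x ^ 2 / 2)

/-- Upper tail of the standard normal distribution. -/
noncomputable def Phibar (x : ℝ) : ℝ := ∫ t in Set.Ioi x, phi t

/-- Inverse of the upper tail function `Φ̄ : ℝ → (0,1)`. -/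
noncomputable def PhibarInv : ℝ → ℝ := Function.invFun Phibar

/-- The function `h_α`. -/
noncomputable def halpha (α ℓ : ℝ) : ℝ := PhibarInv (α * Phibar ℓ) - ℓ

/-- The function `g_α(u) := Φ̄⁻¹(Φ̄(u)/α)`. -/
noncomputable def galpha (α u : ℝ) : ℝ := PhibarInv (Phibar u / α)


section AuxLemmas
open Filter

lemma phi_pos (x : ℝ) : 0 < phi x := by
  unfold phi
  positivity

lemma phi_cont : Continuous phi := by
  unfold phi
  fun_prop

lemma phi_def : phi = fun x => (Real.sqrt (2 * Real.pi))⁻¹ * Real.exp (-(1/2) * x ^ 2) := by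
  funext x
  unfold phi
  ring_nf

lemma integrable_phi : Integrable phi := by
  rw [phi_def]
  exact (integrable_exp_neg_mul_sq (by norm_num : (0:ℝ) < 1/2)).const_mul _

lemma integrable_mul_phi : Integrable (fun x => x * phi x) := by
  have h := (integrable_mul_exp_neg_mul_sq (by norm_num : (0:ℝ) < 1/2)).const_mul
      ((Real.sqrt (2 * Real.pi))⁻¹)
  refine h.congr ?_
  filter_upwards with x
  rw [phi_def]; ring

lemma tendsto_phi_atTop : Tendsto phi atTop (nhds 0) := by
  rw [phi_def]
  have h1 : Tendsto (fun x : ℝ => -(1/2) * x ^ 2) atTop atBot := by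
    apply Tendsto.const_mul_atTop_of_neg (by norm_num : (-(1/2) : ℝ) < 0)
    exact tendsto_pow_atTop (by norm_num)
  have := (Real.tendsto_exp_atBot.comp h1).const_mul ((Real.sqrt (2 * Real.pi))⁻¹)
  simpa using this

lemma hasDerivAt_phi (x : ℝ) : HasDerivAt phi (-x * phi x) x := by
  have h1 : HasDerivAt (fun x : ℝ => -x ^ 2 / 2) (-x) x := by
    have := ((hasDerivAt_pow 2 x).neg).div_const 2
    exact this.congr_deriv (by norm_num; ring)
  have := (h1.exp).const_mul ((Real.sqrt (2 * Real.pi))⁻¹)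
  exact this.congr_deriv (by unfold phi; ring)

lemma Phibar_eq (x : ℝ) : Phibar x = Phibar 0 - ∫ t in (0:ℝ)..x, phi t := by
  have h0 := intervalIntegral.integral_Iic_add_Ioi (b := (0:ℝ)) integrable_phi.integrableOn integrable_phi.integrableOn
  have hx := intervalIntegral.integral_Iic_add_Ioi (b := x) integrable_phi.integrableOn integrable_phi.integrableOn
  have hs := intervalIntegral.integral_Iic_sub_Iic (f := phi) (μ := volume) (a := (0:ℝ)) (b := x)
    integrable_phi.integrableOn integrable_phi.integrableOn
  unfold Phibar
  linarith

lemma hasDerivAt_Phibar (x : ℝ) : HasDerivAt Phibar (-phi x) x := by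
  have h : HasDerivAt (fun u => ∫ t in (0:ℝ)..u, phi t) (phi x) x := by
    refine intervalIntegral.integral_hasDerivAt_right
      (integrable_phi.intervalIntegrable) ?_ phi_cont.continuousAt
    exact phi_cont.stronglyMeasurable.stronglyMeasurableAtFilter
  have := h.const_sub (Phibar 0)
  refine HasDerivAt.congr_of_eventuallyEq this ?_
  filter_upwards with y
  rw [Phibar_eq]

lemma Phibar_cont : Continuous Phibar :=
  continuous_iff_continuousAt.2 fun x => (hasDerivAt_Phibar x).continuousAt

lemma Phibar_strictAnti : StrictAnti Phibar := by
  apply strictAnti_of_deriv_neg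
  intro x
  rw [(hasDerivAt_Phibar x).deriv]
  simpa using phi_pos x

lemma Phibar_pos (x : ℝ) : 0 < Phibar x := by
  unfold Phibar
  rw [setIntegral_pos_iff_support_of_nonneg_ae]
  · have : Function.support phi = univ := by
      ext t; simp [Function.mem_support, (phi_pos t).ne']
    rw [this, univ_inter]
    simp [Real.volume_Ioi]
  · filter_upwards with t using (phi_pos t).le
  · exact integrable_phi.integrableOn

lemma integral_Ioi_mul_phi (x : ℝ) : ∫ t in Ioi x, t * phi t = phi x := by
  have h := integral_Ioi_of_hasDerivAt_of_tendsto' (f := fun t => -phi t)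
    (f' := fun t => t * phi t) (a := x) (m := 0)
    (fun t _ => (hasDerivAt_phi t).neg.congr_deriv (by ring))
    integrable_mul_phi.integrableOn
    (by simpa using tendsto_phi_atTop.neg)
  simpa using h

lemma mills (x : ℝ) : x * Phibar x ≤ phi x := by
  rcases le_or_gt x 0 with hx | hx
  · exact le_trans (mul_nonpos_of_nonpos_of_nonneg hx (Phibar_pos x).le) (phi_pos x).le
  · have h1 : x * Phibar x = ∫ t in Ioi x, x * phi t := by
      rw [integral_const_mul]; rfl
    rw [h1, ← integral_Ioi_mul_phi x]
    apply setIntegral_mono_on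
    · exact integrable_phi.integrableOn.const_mul x
    · exact integrable_mul_phi.integrableOn
    · exact measurableSet_Ioi
    · intro t ht
      exact mul_le_mul_of_nonneg_right (le_of_lt ht) (phi_pos t).le

lemma mills_ratio_hasDeriv (x : ℝ) : HasDerivAt (fun y => Phibar y / phi y)
    ((-phi x * phi x - Phibar x * (-x * phi x)) / phi x ^ 2) x :=
  (hasDerivAt_Phibar x).div (hasDerivAt_phi x) (phi_pos x).ne'

lemma mills_ratio_antitone : Antitone (fun y => Phibar y / phi y) := by
  apply antitone_of_deriv_nonpos
  · exact fun x => (mills_ratio_hasDeriv x).differentiableAt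
  · intro x
    rw [(mills_ratio_hasDeriv x).deriv]
    apply div_nonpos_of_nonpos_of_nonneg _ (sq_nonneg _)
    have h := mills x
    nlinarith [phi_pos x]

lemma key2 {x y : ℝ} (h : x ≤ y) : phi x * Phibar y ≤ phi y * Phibar x := by
  have := mills_ratio_antitone h
  rw [div_le_div_iff₀ (phi_pos y) (phi_pos x)] at this
  linarith [this]

lemma ratio_hasDeriv (v x : ℝ) : HasDerivAt (fun y => Phibar (y + v) / Phibar y)
    ((-phi (x + v) * Phibar x - Phibar (x + v) * (-phi x)) / Phibar x ^ 2) x := by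
  have h1 : HasDerivAt (fun y => Phibar (y + v)) (-phi (x + v)) x := by
    have := (hasDerivAt_Phibar (x + v)).comp x ((hasDerivAt_id x).add_const v)
    simp at this
    exact this
  exact h1.div (hasDerivAt_Phibar x) (Phibar_pos x).ne'

lemma ratio_antitone {v : ℝ} (hv : 0 ≤ v) :
    Antitone (fun y => Phibar (y + v) / Phibar y) := by
  apply antitone_of_deriv_nonpos
  · exact fun x => (ratio_hasDeriv v x).differentiableAt
  · intro x
    rw [(ratio_hasDeriv v x).deriv]
    apply div_nonpos_of_nonpos_of_nonneg _ (sq_nonneg _)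
    have h := key2 (le_add_of_nonneg_right hv : x ≤ x + v)
    linarith

lemma integral_phi : ∫ x, phi x = 1 := by
  rw [phi_def, integral_const_mul, integral_gaussian]
  rw [show (π / (1/2)) = 2 * π by ring]
  rw [inv_mul_cancel₀]
  positivity

lemma Phibar_zero : Phibar 0 = 1 / 2 := by
  have hsym : Phibar 0 = ∫ t in Iic (0:ℝ), phi t := by
    unfold Phibar
    have : (∫ t in Ioi (0:ℝ), phi t) = ∫ t in Ioi (0:ℝ), phi (-t) := by
      refine setIntegral_congr_fun measurableSet_Ioi fun t _ => ?_
      unfold phi; ring_nf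
    rw [this, integral_comp_neg_Ioi]
    norm_num
  have := intervalIntegral.integral_Iic_add_Ioi (b := (0:ℝ)) (f := phi) (μ := volume)
    integrable_phi.integrableOn integrable_phi.integrableOn
  rw [integral_phi] at this
  unfold Phibar at *
  linarith

lemma Phibar_surj {y : ℝ} (h0 : 0 < y) (h2 : y ≤ 1 / 2) : ∃ x, Phibar x = y := by
  have hev : ∀ᶠ x in atTop, phi x < y :=
    tendsto_phi_atTop.eventually (eventually_lt_nhds h0)
  obtain ⟨X₀, hX₀⟩ := (hev.and (eventually_ge_atTop (1:ℝ))).exists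
  obtain ⟨hphiX, hX1⟩ := hX₀
  have hX0 : (0:ℝ) ≤ X₀ := le_trans zero_le_one hX1
  have hPX : Phibar X₀ ≤ y := by
    have hm := mills X₀
    nlinarith [Phibar_pos X₀]
  have := intermediate_value_Icc' hX0 (Phibar_cont.continuousOn (s := Icc 0 X₀))
  have hy : y ∈ Icc (Phibar X₀) (Phibar 0) := ⟨hPX, by rw [Phibar_zero]; exact h2⟩
  obtain ⟨x, _, hx⟩ := this hy
  exact ⟨x, hx⟩


lemma PhibarInv_Phibar (x : ℝ) : PhibarInv (Phibar x) = x :=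
  Function.leftInverse_invFun Phibar_strictAnti.injective x

end AuxLemmas

/-- For `α ∈ (0,1]`, all `u` with `Φ̄(u) ≤ α/2` and `v ≥ 0`, one has
`g_α(u + v) ≥ g_α(u) + v`. -/
theorem galpha_superadditive {α : ℝ} (hα : α ∈ Set.Ioc (0 : ℝ) 1) {u : ℝ}
    (hu : Phibar u ≤ α / 2) {v : ℝ} (hv : 0 ≤ v) :
    galpha α (u + v) ≥ galpha α u + v := by
  obtain ⟨hα0, hα1⟩ := hα
  have hPu := Phibar_pos u
  have hPuv := Phibar_pos (u + v)
  -- find w with Phibar w = Phibar u / α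
  obtain ⟨w, hw⟩ := Phibar_surj (y := Phibar u / α) (by positivity)
    (by rw [div_le_iff₀ hα0]; linarith)
  have hmono : Phibar (u + v) ≤ Phibar u :=
    Phibar_strictAnti.antitone (le_add_of_nonneg_right hv)
  obtain ⟨w', hw'⟩ := Phibar_surj (y := Phibar (u + v) / α) (by positivity)
    (by rw [div_le_iff₀ hα0]; nlinarith)
  have hgu : galpha α u = w := by rw [galpha, ← hw, PhibarInv_Phibar]
  have hguv : galpha α (u + v) = w' := by rw [galpha, ← hw', PhibarInv_Phibar]
  rw [hgu, hguv, ge_iff_le]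
  -- w ≤ u
  have hwu : w ≤ u := by
    have h1 : Phibar u ≤ Phibar w := by
      rw [hw, le_div_iff₀ hα0]
      nlinarith
    exact (Phibar_strictAnti.le_iff_ge).1 h1
  have hPw := Phibar_pos w
  have hPwv := Phibar_pos (w + v)
  -- key inequality
  have hkey := ratio_antitone hv hwu
  simp only [div_le_div_iff₀ hPu hPw] at hkey
  -- Phibar w' ≤ Phibar (w+v)
  have h2 : Phibar w' ≤ Phibar (w + v) := by
    rw [hw']
    rw [div_le_iff₀ hα0]
    have hα' : α = Phibar u / Phibar w := by
      rw [hw]; field_simp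
    rw [hα']
    rw [← mul_div_assoc, le_div_iff₀ hPw]
    linarith
  have := (Phibar_strictAnti.le_iff_ge).1 h2
  linarith
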